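/- Let A be a d-th order CP tensor with factor matrices U_p ∈ ℝ^{n_p×R}. Then the minimum of Σ_{r=1}^R ∏_{p=1}^d ( Σ_{l=1}^{n_p} U_p(l,r)·x_p(l)² ) over all families of vectors x_p ∈ ℝ^{n_p} with ‖x_p‖₂ = 1 for every p = 1,…,d is attained and equals the smallest entry of A, i.e., min_{(i_1,…,i_d) ∈ I} A(i_1,…,i_d). -/

import Mathlib

open Finset

lemma stmt5_swap (d R : ℕ) (n : Fin d → ℕ)
    (U : ∀ p : Fin d, Matrix (Fin (n p)) (Fin R) ℝ)
    (w : ∀ p : Fin d, Fin (n p) → ℝ) :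
    ∑ r : Fin R, ∏ p : Fin d, (∑ l, U p l r * w p l)
      = ∑ j : ∀ p : Fin d, Fin (n p),
          (∏ p : Fin d, w p (j p)) * ∑ r : Fin R, ∏ p : Fin d, U p (j p) r := by
  have h : ∀ r : Fin R, ∏ p : Fin d, (∑ l, U p l r * w p l)
      = ∑ j : ∀ p : Fin d, Fin (n p), ∏ p : Fin d, U p (j p) r * w p (j p) := by
    intro r
    exact Fintype.prod_sum (fun p l => U p l r * w p l)
  simp_rw [h, Finset.mul_sum]
  rw [Finset.sum_comm]
  congr 1
  ext j
  congr 1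
  ext r
  rw [Finset.prod_mul_distrib]
  ring

/-- The minimum of `∑ r, ∏ p, (∑ l, U p l r * (x p l)^2)` over
families of unit vectors `x p` is attained and equals the smallest entry of the
CP tensor `A (i₁,…,i_d) = ∑ r, ∏ p, U p (i p) r`. -/
theorem stmt_5 (d R : ℕ) (n : Fin d → ℕ) (hn : ∀ p, 0 < n p)
    (U : ∀ p : Fin d, Matrix (Fin (n p)) (Fin R) ℝ) :
    ∃ m : ℝ,
      IsLeast {a : ℝ | ∃ i : ∀ p : Fin d, Fin (n p),
          a = ∑ r : Fin R, ∏ p : Fin d, U p (i p) r} m ∧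
      IsLeast {v : ℝ | ∃ x : ∀ p : Fin d, Fin (n p) → ℝ,
          (∀ p : Fin d, ∑ l, (x p l) ^ 2 = 1) ∧
          v = ∑ r : Fin R, ∏ p : Fin d, (∑ l, U p l r * (x p l) ^ 2)} m := by
  have hne : Nonempty (∀ p : Fin d, Fin (n p)) := ⟨fun p => ⟨0, hn p⟩⟩
  set A : (∀ p : Fin d, Fin (n p)) → ℝ :=
    fun i => ∑ r : Fin R, ∏ p : Fin d, U p (i p) r with hA
  obtain ⟨i₀, -, hmin⟩ := Finset.exists_min_image (univ : Finset (∀ p : Fin d, Fin (n p)))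
    A ⟨Classical.arbitrary _, mem_univ _⟩
  have hmin' : ∀ i, A i₀ ≤ A i := fun i => hmin i (mem_univ i)
  refine ⟨A i₀, ⟨⟨i₀, rfl⟩, ?_⟩, ⟨?_, ?_⟩⟩
  · rintro a ⟨i, rfl⟩; exact hmin' i
  · -- membership: take x p to be the indicator of i₀ p
    refine ⟨fun p l => if l = i₀ p then 1 else 0, fun p => by simp, ?_⟩
    have : ∀ (r : Fin R) (p : Fin d),
        (∑ l, U p l r * (if l = i₀ p then (1:ℝ) else 0) ^ 2) = U p (i₀ p) r := by
      intro r p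
      simp [ite_pow, mul_ite, Finset.sum_ite_eq]
    simp_rw [this]
    rfl
  · rintro v ⟨x, hx, rfl⟩
    rw [stmt5_swap d R n U (fun p l => (x p l) ^ 2)]
    have hw : ∑ j : ∀ p : Fin d, Fin (n p), ∏ p : Fin d, (x p (j p)) ^ 2 = 1 := by
      rw [← Fintype.prod_sum (fun p l => (x p l) ^ 2)]
      simp [hx]
    calc A i₀ = ∑ j : ∀ p : Fin d, Fin (n p), (∏ p : Fin d, (x p (j p)) ^ 2) * A i₀ := by
            rw [← Finset.sum_mul, hw, one_mul]
      _ ≤ ∑ j : ∀ p : Fin d, Fin (n p), (∏ p : Fin d, (x p (j p)) ^ 2) * A j := by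
            apply Finset.sum_le_sum
            intro j _
            exact mul_le_mul_of_nonneg_left (hmin' j)
              (Finset.prod_nonneg fun p _ => sq_nonneg _)
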